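/- Let G be a finite group and f : G → G any function. For a tuple x⃗ ∈ G^k, let Stab(x⃗) = {φ ∈ Aut(G) : φ(xᵢ)=xᵢ ∀i} and G_{x⃗} = {(φ(x₁),...,φ(x_k)) : φ ∈ Aut(G)}. Then ∑_{φ ∈ Aut(G)} agr(f,φ)^k = E_{x⃗ ∼ G^k}[ 1[f(x⃗) ∈ G_{x⃗}] · |Stab(x⃗)| ]. -/
import Mathlib


/-- For a finite group `G`, `f : G → G` and `k`,
`∑_{φ ∈ Aut(G)} agr(f,φ)^k` equals the expectation over a uniform tuple `x⃗ ∈ G^k` of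
`1[f(x⃗) ∈ G_{x⃗}] ⋅ |Stab(x⃗)|`, where `G_{x⃗} = {(φ(x₁),…,φ(x_k)) : φ ∈ Aut(G)}` and
`Stab(x⃗)` is the pointwise stabilizer of `x⃗` in `Aut(G)`. -/
theorem sum_aut_agreement_pow_eq_expectation
    {G : Type*} [Group G] [Fintype G] [DecidableEq G] [Fintype (MulAut G)]
    (f : G → G) (k : ℕ) :
    (∑ φ : MulAut G,
        ((((Finset.univ : Finset G).filter (fun x => f x = φ x)).card : ℝ) /
          (Fintype.card G : ℝ)) ^ k)
      = (∑ x : Fin k → G,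
          (if (∃ φ : MulAut G, ∀ i, f (x i) = φ (x i)) then
              (Nat.card {φ : MulAut G // ∀ i, φ (x i) = x i} : ℝ)
            else 0)) / (Fintype.card (Fin k → G) : ℝ) := by
  classical
  have hden : (Fintype.card (Fin k → G) : ℝ) = (Fintype.card G : ℝ) ^ k := by
    rw [Fintype.card_fun]; push_cast; simp
  rw [hden]
  simp only [div_pow, ← Finset.sum_div]
  congr 1
  have key : ∀ φ : MulAut G,
      (((Finset.univ : Finset G).filter (fun x => f x = φ x)).card : ℝ) ^ k
        = ∑ x : Fin k → G, (if (∀ i, f (x i) = φ (x i)) then (1 : ℝ) else 0) := by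
    intro φ
    rw [← Finset.sum_boole, Fintype.sum_pow]
    refine Finset.sum_congr rfl fun x _ => ?_
    rw [Finset.prod_boole]
    simp
  simp only [key]
  rw [Finset.sum_comm]
  refine Finset.sum_congr rfl fun x _ => ?_
  rw [Finset.sum_boole]
  by_cases h : ∃ φ : MulAut G, ∀ i, f (x i) = φ (x i)
  · obtain ⟨ψ, hψ⟩ := h
    rw [if_pos ⟨ψ, hψ⟩, Nat.card_eq_fintype_card, Fintype.card_subtype]
    norm_cast
    apply Finset.card_bij (fun φ _ => ψ⁻¹ * φ)
    · intro φ hφ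
      simp only [Finset.mem_filter, Finset.mem_univ, true_and] at hφ ⊢
      intro i
      have : φ (x i) = ψ (x i) := by rw [← hφ i, ← hψ i]
      simp [MulAut.mul_apply, this]
    · intro a ha b hb hab
      exact mul_left_cancel hab
    · intro θ hθ
      simp only [Finset.mem_filter, Finset.mem_univ, true_and] at hθ
      refine ⟨ψ * θ, ?_, by group⟩
      simp only [Finset.mem_filter, Finset.mem_univ, true_and]
      intro i
      simp [MulAut.mul_apply, hθ i, hψ i]
  · rw [if_neg h]
    norm_cast
    rw [Finset.card_eq_zero, Finset.filter_eq_empty_iff]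
    intro φ _ hφ
    exact h ⟨φ, hφ⟩
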